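/- arXiv:1208.2918 — 2 statements merged into one kernel-verified Lean document; each statement's English description precedes it below -/
import Mathlib

section
/- Let (M, ℬ, μ) be a sigma-finite measure space, I a finite index set, and {τ_i}_{i∈I} measurable maps M → M with a common measurable left-inverse R (i.e., R ∘ τ_i = id for all i), such that μ ∘ τ_i⁻¹ ≪ μ with Radon–Nikodym derivatives g_i = d(μ∘τ_i⁻¹)/dμ satisfying Σ_{i∈I} g_i = 1 μ-a.e. Define operators S_i on L²(μ) by S_i f = χ_{τ_i(M)} · √(g_i) · (f ∘ R), assuming the sets τ_i(M) are measurable and pairwise disjoint with union M. Then the S_i satisfy the Cuntz relations: S_i* S_j = δ_{i,j}·Id on L²(μ), and Σ_{i∈I} S_i S_i* = Id, where S_i* φ = φ ∘ τ_i. -/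
open MeasureTheory

/-- The operator `S f = χ_B · √g · (f ∘ R)` from a closed iterated function system. -/
noncomputable def IFSOp {M : Type*} (B : Set M) (g : M → ℝ) (R : M → M)
    (f : M → ℝ) : M → ℝ :=
  fun x => B.indicator (fun y => Real.sqrt (g y) * f (R y)) x

/-- If `τ` has a measurable left inverse and a measurable range, then the pushforward of a
σ-finite measure along `τ` is σ-finite. -/
lemma ifs_sigmaFinite_map {M : Type*} [MeasurableSpace M] (μ : Measure M) [SigmaFinite μ]
    (τ R : M → M) (hτ : Measurable τ) (hR : Measurable R)
    (hRτ : ∀ x, R (τ x) = x) (hB : MeasurableSet (Set.range τ)) :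
    SigmaFinite (μ.map τ) := by
  refine ⟨⟨⟨fun n => Set.range τ ∩ R ⁻¹' (spanningSets μ n) ∪ (Set.range τ)ᶜ,
    fun _ => trivial, fun n => ?_, ?_⟩⟩⟩
  · have h0 : μ.map τ (Set.range τ)ᶜ = 0 := by
      rw [Measure.map_apply hτ hB.compl]
      have : τ ⁻¹' (Set.range τ)ᶜ = ∅ := by
        ext x; simp [Set.mem_preimage, Set.mem_range]
      simp [this]
    calc μ.map τ (Set.range τ ∩ R ⁻¹' (spanningSets μ n) ∪ (Set.range τ)ᶜ)
        ≤ μ.map τ (Set.range τ ∩ R ⁻¹' (spanningSets μ n)) + μ.map τ (Set.range τ)ᶜ :=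
          measure_union_le _ _
      _ = μ.map τ (Set.range τ ∩ R ⁻¹' (spanningSets μ n)) := by rw [h0, add_zero]
      _ < ⊤ := by
          rw [Measure.map_apply hτ ((hB.inter (hR (measurableSet_spanningSets μ n))))]
          refine lt_of_le_of_lt (measure_mono ?_) (measure_spanningSets_lt_top μ n)
          intro x hx
          have : R (τ x) ∈ spanningSets μ n := hx.2
          rwa [hRτ] at this
  · rw [Set.iUnion_union_distrib]
    apply Set.eq_univ_of_univ_subset
    intro x _
    by_cases hx : x ∈ Set.range τ
    · left
      rw [← Set.inter_iUnion, ← Set.preimage_iUnion, iUnion_spanningSets]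
      simp [hx]
    · right; simp [hx]

/-- Cuntz relations for the operators `S_i f = χ_{τ_i(M)} √(g_i) (f ∘ R)` of a closed
iterated function system: `S_i* S_j = δ_{i,j} Id` (expressed weakly via inner products,
using `S_i* φ = φ ∘ τ_i`) and `Σ_i S_i S_i* = Id` (expressed via `Σ_i ‖S_i* φ‖² = ‖φ‖²`). -/
theorem ifs_cuntz_relations {M : Type*} [MeasurableSpace M]
    (μ : Measure M) [SigmaFinite μ] {I : Type*} [Fintype I] [DecidableEq I]
    (τ : I → M → M) (R : M → M) (hτ : ∀ i, Measurable (τ i)) (hR : Measurable R)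
    (hRτ : ∀ i x, R (τ i x) = x)
    (hBmeas : ∀ i, MeasurableSet (Set.range (τ i)))
    (hdisj : ∀ i j, i ≠ j → Disjoint (Set.range (τ i)) (Set.range (τ j)))
    (hcover : (⋃ i, Set.range (τ i)) = Set.univ)
    (hac : ∀ i, μ.map (τ i) ≪ μ)
    (g : I → M → ℝ) (hg : ∀ i x, g i x = (((μ.map (τ i)).rnDeriv μ) x).toReal)
    (hclosed : ∀ᵐ x ∂μ, ∑ i, g i x = 1) :
    -- `S_i* S_j = δ_{i,j} Id`, weakly: `⟨S_i f, S_j h⟩ = δ_{i,j} ⟨f, h⟩`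
    (∀ i j : I, ∀ f h : M → ℝ, MemLp f 2 μ → MemLp h 2 μ →
      ∫ x, IFSOp (Set.range (τ i)) (g i) R f x * IFSOp (Set.range (τ j)) (g j) R h x ∂μ
        = if i = j then ∫ x, f x * h x ∂μ else 0)
    -- `Σ_i S_i S_i* = Id`, weakly: `Σ_i ‖S_i* φ‖² = ‖φ‖²` where `S_i* φ = φ ∘ τ_i`
    ∧ (∀ φ : M → ℝ, MemLp φ 2 μ →
        ∑ i : I, ∫ x, (φ (τ i x)) ^ 2 ∂μ = ∫ x, (φ x) ^ 2 ∂μ) := by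
  have hsf : ∀ i, SigmaFinite (μ.map (τ i)) := fun i =>
    ifs_sigmaFinite_map μ (τ i) R (hτ i) hR (hRτ i) (hBmeas i)
  have hgnn : ∀ i x, 0 ≤ g i x := fun i x => by rw [hg]; exact ENNReal.toReal_nonneg
  -- pushforward along `R` of `μ.map (τ i)` recovers `μ`
  have hmapR : ∀ i, (μ.map (τ i)).map R = μ := by
    intro i
    rw [Measure.map_map hR (hτ i)]
    have : R ∘ τ i = id := funext fun x => hRτ i x
    rw [this, Measure.map_id]
  -- key change-of-variables identity `∫ g_i · (F ∘ R) dμ = ∫ F dμ`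
  have key : ∀ i (F : M → ℝ), AEStronglyMeasurable F μ →
      ∫ x, g i x * F (R x) ∂μ = ∫ x, F x ∂μ := by
    intro i F hF
    haveI := hsf i
    have hF' : AEStronglyMeasurable F ((μ.map (τ i)).map R) := by rw [hmapR i]; exact hF
    calc ∫ x, g i x * F (R x) ∂μ
        = ∫ x, (((μ.map (τ i)).rnDeriv μ) x).toReal • F (R x) ∂μ := by
          simp only [smul_eq_mul, hg]
      _ = ∫ x, F (R x) ∂(μ.map (τ i)) := integral_rnDeriv_smul (hac i)
      _ = ∫ y, F y ∂((μ.map (τ i)).map R) := (integral_map hR.aemeasurable hF').symm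
      _ = ∫ y, F y ∂μ := by rw [hmapR i]
  -- second key identity: `∫ G ∘ τ_i dμ = ∫ g_i · G dμ`
  have key2 : ∀ i (G : M → ℝ), AEStronglyMeasurable G μ →
      ∫ x, G (τ i x) ∂μ = ∫ x, g i x * G x ∂μ := by
    intro i G hG
    haveI := hsf i
    calc ∫ x, G (τ i x) ∂μ
        = ∫ y, G y ∂(μ.map (τ i)) :=
          (integral_map (hτ i).aemeasurable (hG.mono_ac (hac i))).symm
      _ = ∫ x, (((μ.map (τ i)).rnDeriv μ) x).toReal • G x ∂μ :=
          (integral_rnDeriv_smul (hac i)).symm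
      _ = ∫ x, g i x * G x ∂μ := by simp only [smul_eq_mul, hg]
  -- `g_i` vanishes a.e. off the range of `τ_i`
  have hzero : ∀ i, ∀ᵐ x ∂μ, x ∉ Set.range (τ i) → g i x = 0 := by
    intro i
    haveI := hsf i
    have hmap0 : μ.map (τ i) (Set.range (τ i))ᶜ = 0 := by
      rw [Measure.map_apply (hτ i) (hBmeas i).compl]
      have : τ i ⁻¹' (Set.range (τ i))ᶜ = ∅ := by
        ext x; simp [Set.mem_preimage, Set.mem_range]
      simp [this]
    have hwd : μ.withDensity ((μ.map (τ i)).rnDeriv μ) = μ.map (τ i) :=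
      Measure.withDensity_rnDeriv_eq _ _ (hac i)
    have hint0 : ∫⁻ x in (Set.range (τ i))ᶜ, (μ.map (τ i)).rnDeriv μ x ∂μ = 0 := by
      rw [← withDensity_apply _ (hBmeas i).compl, hwd, hmap0]
    have := (setLIntegral_eq_zero_iff (hBmeas i).compl
      (Measure.measurable_rnDeriv _ _)).mp hint0
    filter_upwards [this] with x hx hxB
    rw [hg, hx hxB, ENNReal.toReal_zero]
  constructor
  · intro i j f h hf hh
    by_cases hij : i = j
    · subst hij
      rw [if_pos rfl]
      set B := Set.range (τ i)
      -- pointwise rewriting of the integrand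
      have hpt : ∀ x, IFSOp B (g i) R f x * IFSOp B (g i) R h x
          = B.indicator (fun y => g i y * (f (R y) * h (R y))) x := by
        intro x
        by_cases hx : x ∈ B
        · simp only [IFSOp, Set.indicator_of_mem hx]
          have : Real.sqrt (g i x) * Real.sqrt (g i x) = g i x :=
            Real.mul_self_sqrt (hgnn i x)
          ring_nf
          rw [Real.sq_sqrt (hgnn i x)]
          ring
        · simp [IFSOp, Set.indicator_of_notMem hx]
      have hae : (fun x => IFSOp B (g i) R f x * IFSOp B (g i) R h x)
          =ᵐ[μ] fun x => g i x * (f (R x) * h (R x)) := by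
        filter_upwards [hzero i] with x hx
        rw [hpt x]
        by_cases hxB : x ∈ B
        · rw [Set.indicator_of_mem hxB]
        · rw [Set.indicator_of_notMem hxB, hx hxB, zero_mul]
      rw [integral_congr_ae hae, key i (fun y => f y * h y) (hf.1.mul hh.1)]
    · rw [if_neg hij]
      have hpt : ∀ x, IFSOp (Set.range (τ i)) (g i) R f x
          * IFSOp (Set.range (τ j)) (g j) R h x = 0 := by
        intro x
        by_cases hx : x ∈ Set.range (τ i)
        · have hx' : x ∉ Set.range (τ j) := Set.disjoint_left.mp (hdisj i j hij) hx
          simp [IFSOp, Set.indicator_of_notMem hx']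
        · simp [IFSOp, Set.indicator_of_notMem hx]
      simp only [hpt, integral_zero]
  · intro φ hφ
    have hφ2 : AEStronglyMeasurable (fun x => φ x ^ 2) μ := by
      have : AEStronglyMeasurable (fun x => φ x * φ x) μ := hφ.1.mul hφ.1
      simpa [sq] using this
    have hint : Integrable (fun x => φ x ^ 2) μ := hφ.integrable_sq
    -- each summand is integrable
    have hgmeas : ∀ i, AEStronglyMeasurable (fun x => g i x * φ x ^ 2) μ := by
      intro i
      have hgm : Measurable (g i) := by
        have : g i = fun x => (((μ.map (τ i)).rnDeriv μ) x).toReal := funext (hg i)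
        rw [this]
        exact (Measure.measurable_rnDeriv _ _).ennreal_toReal
      exact hgm.aestronglyMeasurable.mul hφ2
    have hgle : ∀ i, ∀ᵐ x ∂μ, g i x ≤ 1 := by
      intro i
      filter_upwards [hclosed] with x hx
      calc g i x ≤ ∑ k, g k x := Finset.single_le_sum (fun k _ => hgnn k x) (Finset.mem_univ i)
        _ = 1 := hx
    have hintg : ∀ i, Integrable (fun x => g i x * φ x ^ 2) μ := by
      intro i
      refine hint.mono (hgmeas i) ?_
      filter_upwards [hgle i] with x hx
      rw [norm_mul]
      calc ‖g i x‖ * ‖φ x ^ 2‖ ≤ 1 * ‖φ x ^ 2‖ := by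
            apply mul_le_mul_of_nonneg_right _ (norm_nonneg _)
            rw [Real.norm_of_nonneg (hgnn i x)]; exact hx
        _ = ‖φ x ^ 2‖ := one_mul _
    calc ∑ i : I, ∫ x, (φ (τ i x)) ^ 2 ∂μ
        = ∑ i : I, ∫ x, g i x * φ x ^ 2 ∂μ := by
          refine Finset.sum_congr rfl fun i _ => ?_
          exact key2 i (fun y => φ y ^ 2) hφ2
      _ = ∫ x, ∑ i : I, g i x * φ x ^ 2 ∂μ :=
          (integral_finset_sum Finset.univ fun i _ => hintg i).symm
      _ = ∫ x, (φ x) ^ 2 ∂μ := by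
          refine integral_congr_ae ?_
          filter_upwards [hclosed] with x hx
          rw [← Finset.sum_mul, hx, one_mul]
end

section
/- The Brownian motion kernel admits the series expansion min(t,s) = t·s + (2/π²) Σ_{k=1}^∞ sin(kπt)·sin(kπs)/k² for all t, s ∈ [0,1]. -/
open Real in
lemma bern2_eval (x : ℝ) :
    (Polynomial.map (algebraMap ℚ ℝ) (Polynomial.bernoulli 2)).eval x = x^2 - x + 1/6 := by
  simp [Polynomial.bernoulli, Finset.sum_range_succ]
  norm_num [bernoulli_one, bernoulli_eq_bernoulli'_of_ne_one, bernoulli'_two]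
  ring

open Real in
lemma cos_series (x : ℝ) (hx : x ∈ Set.Icc (0:ℝ) 1) :
    HasSum (fun n : ℕ => 1 / (n : ℝ) ^ 2 * Real.cos (2 * π * n * x))
      (π ^ 2 * (x ^ 2 - x + 1/6)) := by
  have h := hasSum_one_div_nat_pow_mul_cos (k := 1) one_ne_zero hx
  norm_num at h
  rw [Polynomial.aeval_def, ← Polynomial.eval_map, bern2_eval] at h
  convert h using 1
  · funext n; rw [one_div]
  · ring

open Real

/-- Series expansion of the Brownian motion kernel:
`min(t,s) = ts + (2/π²) Σ_{k≥1} sin(kπt) sin(kπs)/k²` for `t, s ∈ [0,1]`. -/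
theorem brownian_kernel_series (t s : ℝ)
    (ht : t ∈ Set.Icc (0:ℝ) 1) (hs : s ∈ Set.Icc (0:ℝ) 1) :
    min t s = t * s + (2 / Real.pi ^ 2) *
      ∑' k : ℕ, Real.sin ((k + 1) * Real.pi * t) * Real.sin ((k + 1) * Real.pi * s)
        / (k + 1) ^ 2 := by
  obtain ⟨ht0, ht1⟩ := ht
  obtain ⟨hs0, hs1⟩ := hs
  set u : ℝ := |t - s| / 2 with hu
  set v : ℝ := (t + s) / 2 with hv
  have habs : |t - s| ≤ 1 := abs_sub_le_iff.mpr ⟨by linarith, by linarith⟩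
  have hum : u ∈ Set.Icc (0:ℝ) 1 := ⟨by positivity, by rw [hu]; linarith⟩
  have hvm : v ∈ Set.Icc (0:ℝ) 1 := ⟨by rw [hv]; linarith, by rw [hv]; linarith⟩
  have h1 := cos_series u hum
  have h2 := cos_series v hvm
  have h := ((h1.sub h2).div_const 2)
  set f : ℕ → ℝ := fun n => (1 / (n : ℝ) ^ 2 * Real.cos (2 * π * n * u)
      - 1 / (n : ℝ) ^ 2 * Real.cos (2 * π * n * v)) / 2 with hf
  have hmin : |t - s| = t + s - 2 * min t s := by
    rcases le_total t s with hts | hts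
    · rw [abs_of_nonpos (by linarith), min_eq_left hts]; ring
    · rw [abs_of_nonneg (by linarith), min_eq_right hts]; ring
  have hval : (π ^ 2 * (u ^ 2 - u + 1/6) - π ^ 2 * (v ^ 2 - v + 1/6)) / 2
      = π ^ 2 / 2 * (min t s - t * s) := by
    have husq : u ^ 2 = (t - s) ^ 2 / 4 := by rw [hu, div_pow, sq_abs]; norm_num
    rw [husq, hu, hv, hmin]
    ring
  rw [hval] at h
  have hshift : HasSum (fun n : ℕ => f (n + 1)) (π ^ 2 / 2 * (min t s - t * s)) := by
    rw [hasSum_nat_add_iff 1]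
    simpa [hf] using h
  have hterm : ∀ k : ℕ, f (k + 1) =
      Real.sin ((k + 1) * π * t) * Real.sin ((k + 1) * π * s) / (k + 1) ^ 2 := by
    intro k
    have hc1 : Real.cos (2 * π * ((k:ℝ) + 1) * u) = Real.cos (((k:ℝ) + 1) * π * (t - s)) := by
      have he : 2 * π * ((k:ℝ) + 1) * u = |((k:ℝ) + 1) * π * (t - s)| := by
        rw [hu, abs_mul, abs_of_pos (by positivity : (0:ℝ) < ((k:ℝ) + 1) * π)]
        ring
      rw [he, Real.cos_abs]
    have hc2 : Real.cos (2 * π * ((k:ℝ) + 1) * v) = Real.cos (((k:ℝ) + 1) * π * (t + s)) := by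
      rw [hv]; congr 1; ring
    have hcc : Real.cos (((k:ℝ) + 1) * π * (t - s)) - Real.cos (((k:ℝ) + 1) * π * (t + s))
        = 2 * Real.sin (((k : ℝ) + 1) * π * t) * Real.sin (((k : ℝ) + 1) * π * s) := by
      rw [Real.cos_sub_cos]
      rw [show (((k:ℝ) + 1) * π * (t - s) + ((k:ℝ) + 1) * π * (t + s)) / 2
          = ((k:ℝ) + 1) * π * t by ring]
      rw [show (((k:ℝ) + 1) * π * (t - s) - ((k:ℝ) + 1) * π * (t + s)) / 2
          = -(((k:ℝ) + 1) * π * s) by ring]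
      rw [Real.sin_neg]
      ring
    rw [hf]
    simp only
    push_cast
    rw [hc1, hc2, ← mul_sub, hcc]
    have hn : ((k : ℝ) + 1) ^ 2 ≠ 0 := by positivity
    field_simp
  have hS : HasSum (fun k : ℕ =>
      Real.sin ((k + 1) * π * t) * Real.sin ((k + 1) * π * s) / (k + 1) ^ 2)
      (π ^ 2 / 2 * (min t s - t * s)) := by
    convert hshift using 1
    funext k
    rw [hterm k]
  rw [hS.tsum_eq]
  have hπ : π ≠ 0 := Real.pi_ne_zero
  field_simp
  ring
end
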